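/- Let c ≥ 1 be an integer, J a finite index set, and for each i ∈ {1,…,c} let P_i, Q_i : ℂ → ℂ be functions. For each j ∈ J let β_{0,j} ∈ ℂ and a sign vector x^{(j)} ∈ {−1,1}^c be given such that the map j ↦ (β_{0,j}, x^{(j)}) is injective, and set β_{i,j} = P_i(β_{0,j}) + x^{(j)}_i · Q_i(β_{0,j}) for i = 1,…,c, where Q_i(β_{0,j}) ≠ 0 for all i and j. Then the functions p_j : ℕ × {0,1}^c → ℂ given by p_j(n₀, n) = β_{0,j}^{n₀} · Π_{i=1}^c β_{i,j}^{n_i} are linearly independent: if α_j ∈ ℂ satisfy Σ_{j∈J} α_j p_j(n₀,n) = 0 for all n₀ ∈ ℕ and all n ∈ {0,1}^c, then α_j = 0 for every j ∈ J. -/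

import Mathlib

open scoped BigOperators

/-- Linear independence of the product-form solutions (Lemma 3.4): if
`β_{i,j} = P_i(β_{0,j}) + x^{(j)}_i Q_i(β_{0,j})` with `Q_i(β_{0,j}) ≠ 0`, the sign
vectors `x^{(j)} ∈ {-1,1}^c`, and `j ↦ (β_{0,j}, x^{(j)})` injective, then the functions
`p_j(n₀,n) = β_{0,j}^{n₀} Π_i β_{i,j}^{n_i}` on `ℕ × {0,1}^c` are linearly
independent. -/
theorem stmt6 (c : ℕ) (hc : 1 ≤ c) (J : Type*) [Fintype J]
    (P Q : Fin c → ℂ → ℂ)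
    (β₀ : J → ℂ) (x : J → Fin c → ℝ) (hx : ∀ j i, x j i = 1 ∨ x j i = -1)
    (hinj : Function.Injective (fun j => (β₀ j, x j)))
    (β : Fin c → J → ℂ)
    (hβ : ∀ i j, β i j = P i (β₀ j) + (x j i : ℂ) * Q i (β₀ j))
    (hQ : ∀ i j, Q i (β₀ j) ≠ 0)
    (α : J → ℂ)
    (hzero : ∀ n₀ : ℕ, ∀ n : Fin c → ℕ, (∀ i, n i ≤ 1) →
      ∑ j : J, α j * (β₀ j ^ n₀ * ∏ i : Fin c, β i j ^ n i) = 0) :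
    ∀ j, α j = 0 := by
  classical
  -- Base: sums against β₀^k times a partial product over any subset t vanish.
  have hbase : ∀ (k : ℕ) (t : Finset (Fin c)),
      ∑ j : J, α j * β₀ j ^ k * ∏ i ∈ t, β i j = 0 := by
    intro k t
    have h := hzero k (fun i => if i ∈ t then 1 else 0) (by intro i; split <;> simp)
    have hp : ∀ j : J, (∏ i : Fin c, β i j ^ (if i ∈ t then 1 else 0)) = ∏ i ∈ t, β i j := by
      intro j
      rw [show (∏ i : Fin c, β i j ^ (if i ∈ t then 1 else 0))
            = ∏ i : Fin c, (if i ∈ t then β i j else 1) from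
        Finset.prod_congr rfl (fun i _ => by split <;> simp)]
      simp [Finset.prod_ite_mem]
    calc ∑ j : J, α j * β₀ j ^ k * ∏ i ∈ t, β i j
        = ∑ j : J, α j * (β₀ j ^ k * ∏ i : Fin c, β i j ^ (if i ∈ t then 1 else 0)) := by
          refine Finset.sum_congr rfl fun j _ => ?_
          rw [hp j]; ring
      _ = 0 := h
  -- Expand a full product of differences via subsets.
  have hA : ∀ (k : ℕ) (a : Fin c → ℂ),
      ∑ j : J, α j * β₀ j ^ k * ∏ i : Fin c, (β i j - a i) = 0 := by
    intro k a
    have expand : ∀ j : J, (∏ i : Fin c, (β i j - a i))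
        = ∑ t ∈ (Finset.univ : Finset (Fin c)).powerset,
            (∏ i ∈ t, β i j) * ∏ i ∈ Finset.univ \ t, (-a i) := by
      intro j
      simpa [sub_eq_add_neg] using
        Finset.prod_add (fun i => β i j) (fun i => -a i) Finset.univ
    calc ∑ j : J, α j * β₀ j ^ k * ∏ i : Fin c, (β i j - a i)
        = ∑ j : J, ∑ t ∈ (Finset.univ : Finset (Fin c)).powerset,
            (∏ i ∈ Finset.univ \ t, (-a i)) * (α j * β₀ j ^ k * ∏ i ∈ t, β i j) := by
          refine Finset.sum_congr rfl fun j _ => ?_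
          rw [expand j, Finset.mul_sum]
          exact Finset.sum_congr rfl fun t _ => by ring
      _ = ∑ t ∈ (Finset.univ : Finset (Fin c)).powerset,
            (∏ i ∈ Finset.univ \ t, (-a i)) * ∑ j : J, α j * β₀ j ^ k * ∏ i ∈ t, β i j := by
          rw [Finset.sum_comm]
          exact Finset.sum_congr rfl fun t _ => by rw [Finset.mul_sum]
      _ = 0 := by simp [hbase]
  -- Upgrade β₀^k to an arbitrary polynomial.
  have hB : ∀ (f : Polynomial ℂ) (a : Fin c → ℂ),
      ∑ j : J, α j * f.eval (β₀ j) * ∏ i : Fin c, (β i j - a i) = 0 := by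
    intro f a
    calc ∑ j : J, α j * f.eval (β₀ j) * ∏ i : Fin c, (β i j - a i)
        = ∑ j : J, ∑ k ∈ Finset.range (f.natDegree + 1),
            f.coeff k * (α j * β₀ j ^ k * ∏ i : Fin c, (β i j - a i)) := by
          refine Finset.sum_congr rfl fun j _ => ?_
          rw [Polynomial.eval_eq_sum_range, Finset.mul_sum, Finset.sum_mul]
          exact Finset.sum_congr rfl fun k _ => by ring
      _ = ∑ k ∈ Finset.range (f.natDegree + 1),
            f.coeff k * ∑ j : J, α j * β₀ j ^ k * ∏ i : Fin c, (β i j - a i) := by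
          rw [Finset.sum_comm]
          exact Finset.sum_congr rfl fun k _ => by rw [Finset.mul_sum]
      _ = 0 := by simp [hA]
  intro j₀
  set a : Fin c → ℂ := fun i => P i (β₀ j₀) - (x j₀ i : ℂ) * Q i (β₀ j₀) with ha
  set S : Finset ℂ := (Finset.univ.image β₀).erase (β₀ j₀) with hS
  set f : Polynomial ℂ := ∏ b ∈ S, (Polynomial.X - Polynomial.C b) with hf
  have key := hB f a
  -- value at j₀ of the product part
  have hprodj₀ : (∏ i : Fin c, (β i j₀ - a i)) = ∏ i : Fin c, (2 * (x j₀ i : ℂ) * Q i (β₀ j₀)) := by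
    refine Finset.prod_congr rfl fun i _ => ?_
    rw [hβ i j₀]; ring
  have hxne : ∀ j i, ((x j i : ℂ)) ≠ 0 := by
    intro j i
    rcases hx j i with h | h <;> simp [h]
  have hprodne : (∏ i : Fin c, (β i j₀ - a i)) ≠ 0 := by
    rw [hprodj₀]
    exact Finset.prod_ne_zero_iff.2 fun i _ =>
      mul_ne_zero (mul_ne_zero two_ne_zero (hxne j₀ i)) (hQ i j₀)
  have hfne : f.eval (β₀ j₀) ≠ 0 := by
    rw [hf]
    simp only [Polynomial.eval_prod, Polynomial.eval_sub, Polynomial.eval_X, Polynomial.eval_C]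
    refine Finset.prod_ne_zero_iff.2 fun b hb => ?_
    have := Finset.ne_of_mem_erase hb
    exact sub_ne_zero.2 (Ne.symm this)
  -- all other terms vanish
  have hsingle : ∀ j : J, j ≠ j₀ →
      α j * f.eval (β₀ j) * ∏ i : Fin c, (β i j - a i) = 0 := by
    intro j hj
    by_cases hb : β₀ j = β₀ j₀
    · -- then x j ≠ x j₀, find a differing coordinate
      have hxj : x j ≠ x j₀ := by
        intro hxx
        exact hj (hinj (by simp [Prod.ext_iff, hb, hxx]))
      obtain ⟨i, hi⟩ := Function.ne_iff.1 hxj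
      have : β i j - a i = 0 := by
        rw [hβ i j, ha, hb]
        have hsum : (x j i : ℂ) + (x j₀ i : ℂ) = 0 := by
          rcases hx j i with h1 | h1 <;> rcases hx j₀ i with h2 | h2 <;>
            simp_all [h1, h2] <;> norm_num
        ring_nf
        linear_combination Q i (β₀ j₀) * hsum
      rw [Finset.prod_eq_zero (Finset.mem_univ i) this, mul_zero]
    · -- β₀ j is a root of f
      have hmem : β₀ j ∈ S := by
        rw [hS]
        exact Finset.mem_erase.2 ⟨hb, Finset.mem_image_of_mem β₀ (Finset.mem_univ j)⟩
      have : f.eval (β₀ j) = 0 := by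
        rw [hf]
        simp only [Polynomial.eval_prod, Polynomial.eval_sub, Polynomial.eval_X,
          Polynomial.eval_C]
        exact Finset.prod_eq_zero hmem (by simp)
      rw [this, mul_zero, zero_mul]
  rw [Finset.sum_eq_single j₀ (fun j _ hj => hsingle j hj) (by simp)] at key
  rcases mul_eq_zero.1 key with h | h
  · rcases mul_eq_zero.1 h with h' | h'
    · exact h'
    · exact absurd h' hfne
  · exact absurd h hprodne
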